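/- Let z_k ∈ ℂ^D for k = -M,…,M with k ≠ 0, and define for each j ≤ d the function z(t) = Σ_{k≠0, |k|≤M} e^{ikωt} Σ_{j=0}^d t^j z_{k,j}. Define coefficients y_{k,j} recursively by y_{k,d+1} = 0 and y_{k,j} = (1/(ikω))(z_{k,j} − (j+1) y_{k,j+1}) for j = d, d−1, …, 0. Then Y(t) := Σ_{k≠0,|k|≤M} e^{ikωt} Σ_{j=0}^d t^j y_{k,j} satisfies Y'(t) = z(t). -/

import Mathlib

/-- Exact antiderivative formula for the nonzero Fourier modes of a
Taylor–Fourier function: with `y_{k,d+1} = 0` and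
`y_{k,j} = (1/(ikω))(z_{k,j} − (j+1) y_{k,j+1})`, the function
`Y(t) = Σ_{k≠0,|k|≤M} e^{ikωt} Σ_{j≤d} t^j y_{k,j}` satisfies `Y' = z`. -/
theorem stmt_4 (D M d : ℕ) (ω : ℝ) (hω : 0 < ω)
    (z y : ℤ → ℕ → Fin D → ℂ)
    (hyd : ∀ k : ℤ, y k (d + 1) = 0)
    (hrec : ∀ k ∈ Finset.Icc (-(M : ℤ)) (M : ℤ), k ≠ 0 → ∀ j ≤ d,
        y k j = (Complex.I * (k : ℂ) * (ω : ℂ))⁻¹ •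
          (z k j - ((j : ℂ) + 1) • y k (j + 1)))
    (Z Y : ℝ → Fin D → ℂ)
    (hZ : ∀ t : ℝ, Z t = ∑ k ∈ (Finset.Icc (-(M : ℤ)) (M : ℤ)).erase 0,
        Complex.exp (Complex.I * (k : ℂ) * ((ω : ℂ) * (t : ℂ))) •
          ∑ j ∈ Finset.range (d + 1), (t : ℂ) ^ j • z k j)
    (hY : ∀ t : ℝ, Y t = ∑ k ∈ (Finset.Icc (-(M : ℤ)) (M : ℤ)).erase 0,
        Complex.exp (Complex.I * (k : ℂ) * ((ω : ℂ) * (t : ℂ))) •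
          ∑ j ∈ Finset.range (d + 1), (t : ℂ) ^ j • y k j) :
    ∀ t : ℝ, HasDerivAt Y (Z t) t := by
  intro t
  have hYe : Y = fun s : ℝ => ∑ k ∈ (Finset.Icc (-(M : ℤ)) (M : ℤ)).erase 0,
      Complex.exp (Complex.I * (k : ℂ) * ((ω : ℂ) * (s : ℂ))) •
        ∑ j ∈ Finset.range (d + 1), (s : ℂ) ^ j • y k j := funext hY
  rw [hYe, hZ t]
  apply HasDerivAt.fun_sum
  intro k hk
  have hk0 : k ≠ 0 := Finset.ne_of_mem_erase hk
  set a : ℂ := Complex.I * (k : ℂ) * (ω : ℂ) with ha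
  have ha0 : a ≠ 0 := by
    simp only [ha, mul_ne_zero_iff]
    refine ⟨⟨Complex.I_ne_zero, ?_⟩, ?_⟩
    · exact_mod_cast hk0
    · exact_mod_cast hω.ne'
  -- derivative of the exponential factor
  have hexp : HasDerivAt (fun s : ℝ => Complex.exp (Complex.I * (k : ℂ) * ((ω : ℂ) * (s : ℂ))))
      (a * Complex.exp (Complex.I * (k : ℂ) * ((ω : ℂ) * (t : ℂ)))) t := by
    have hinner : HasDerivAt (fun s : ℂ => Complex.I * (k : ℂ) * ((ω : ℂ) * s)) a (t : ℂ) := by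
      have := (((hasDerivAt_id (t : ℂ)).const_mul ((ω : ℂ))).const_mul (Complex.I * (k : ℂ)))
      simpa [ha, mul_assoc] using this
    simpa [mul_comm] using (hinner.cexp).comp_ofReal
  -- derivative of the polynomial part
  have hQ : HasDerivAt (fun s : ℝ => ∑ j ∈ Finset.range (d + 1), (s : ℂ) ^ j • y k j)
      (∑ j ∈ Finset.range (d + 1), ((j : ℂ) * (t : ℂ) ^ (j - 1)) • y k j) t := by
    apply HasDerivAt.fun_sum
    intro j _
    exact ((hasDerivAt_pow j (t : ℂ)).comp_ofReal).smul_const (y k j)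
  have hz : ∀ j ≤ d, z k j = a • y k j + ((j : ℂ) + 1) • y k (j + 1) := by
    intro j hj
    have h := hrec k (Finset.mem_of_mem_erase hk) hk0 j hj
    rw [h, smul_smul, mul_inv_cancel₀ ha0, one_smul]
    abel
  have key : ∑ j ∈ Finset.range (d + 1), (t : ℂ) ^ j • z k j
      = a • (∑ j ∈ Finset.range (d + 1), (t : ℂ) ^ j • y k j)
        + ∑ j ∈ Finset.range (d + 1), ((j : ℂ) * (t : ℂ) ^ (j - 1)) • y k j := by
    have step1 : ∑ j ∈ Finset.range (d + 1), (t : ℂ) ^ j • z k j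
        = ∑ j ∈ Finset.range (d + 1),
            (a • ((t : ℂ) ^ j • y k j) + (((j : ℂ) + 1) * (t : ℂ) ^ j) • y k (j + 1)) := by
      refine Finset.sum_congr rfl fun j hj => ?_
      rw [hz j (by simpa using Nat.lt_succ_iff.mp (Finset.mem_range.mp hj))]
      module
    rw [step1, Finset.sum_add_distrib, ← Finset.smul_sum]
    congr 1
    rw [Finset.sum_range_succ, Finset.sum_range_succ'
      (fun j => ((j : ℂ) * (t : ℂ) ^ (j - 1)) • y k j) d]
    simp [hyd k]
  have := hexp.fun_smul hQ
  convert this using 1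
  rw [key]
  module
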